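/- Let k be a positive integer and let w_k(y) = ∫₀^y u_k(t) dt. Then for every j = 1,…,k−1 one has ∫_{y_j}^{y_{j+1}} w_k(t) dt = 0. Consequently the potential v_k (which satisfies v_k' = −w_k) takes the same value at all the jump points y₁,…,y_k of u_k, i.e. u_k satisfies the criticality condition v_k(y_i) = v_k(y_j) for all 1 ≤ i, j ≤ k. -/

import Mathlib

open MeasureTheory intervalIntegral

/-- The lamellar configuration `u_k`: equals `(-1)^j` on `(y_j, y_{j+1})` where
`y_j = (2j-1)/(2k)`, `y_0 = 0`, `y_{k+1} = 1`. -/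
noncomputable def uk (k : ℕ) (t : ℝ) : ℝ := (-1 : ℝ) ^ ⌊(k : ℝ) * t + 1 / 2⌋

/-- `w_k(y) = ∫₀^y u_k(t) dt`. -/
noncomputable def wk (k : ℕ) (y : ℝ) : ℝ := ∫ t in (0 : ℝ)..y, uk k t

lemma uk_meas (k : ℕ) : Measurable (uk k) := by
  have h1 : Measurable fun t : ℝ => ⌊(k : ℝ) * t + 1 / 2⌋ :=
    ((measurable_id.const_mul _).add_const _).floor
  exact (Measurable.of_discrete (f := fun n : ℤ => ((-1 : ℝ)) ^ n)).comp h1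

lemma uk_ii (k : ℕ) (a b : ℝ) : IntervalIntegrable (uk k) volume a b := by
  rw [intervalIntegrable_iff]
  refine MeasureTheory.Integrable.mono' (g := fun _ => (1:ℝ)) ?_ ((uk_meas k).aestronglyMeasurable.restrict) ?_
  · exact integrableOn_const measure_Ioc_lt_top.ne
  · filter_upwards with t
    unfold uk
    rcases Int.even_or_odd ⌊(k : ℝ) * t + 1 / 2⌋ with h | h
    · rw [h.neg_one_zpow]; norm_num
    · rw [Odd.neg_one_zpow h]; norm_num

lemma uk_eq (k j : ℕ) {t : ℝ} (h1 : (2*(j:ℝ)-1)/(2*k) ≤ t) (h2 : t < (2*(j:ℝ)+1)/(2*k)) (hk : 1 ≤ k) :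
    uk k t = (-1)^j := by
  have hk' : (0:ℝ) < 2*k := by positivity
  have hfloor : ⌊(k : ℝ) * t + 1 / 2⌋ = (j : ℤ) := by
    rw [Int.floor_eq_iff]
    rw [div_le_iff₀ hk'] at h1
    rw [lt_div_iff₀ hk'] at h2
    push_cast
    constructor <;> nlinarith
  rw [uk, hfloor, zpow_natCast]
open MeasureTheory intervalIntegral

lemma int_uk (k j : ℕ) (hk : 1 ≤ k) {a b : ℝ} (hab : a ≤ b)
    (ha : (2*(j:ℝ)-1)/(2*k) ≤ a) (hb : b ≤ (2*(j:ℝ)+1)/(2*k)) :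
    (∫ t in a..b, uk k t) = (-1)^j * (b - a) := by
  have h1 : (∫ t in a..b, uk k t) = ∫ t in a..b, ((-1:ℝ))^j := by
    apply intervalIntegral.integral_congr_ae
    have hb' : ∀ᵐ x : ℝ, x ≠ b := by
      rw [MeasureTheory.ae_iff]
      simpa using Real.volume_singleton
    filter_upwards [hb'] with x hx hxI
    rw [Set.uIoc_of_le hab] at hxI
    exact uk_eq k j (ha.trans hxI.1.le) (lt_of_lt_of_le (lt_of_le_of_ne hxI.2 hx) hb) hk
  rw [h1, intervalIntegral.integral_const, smul_eq_mul, mul_comm]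

lemma wk_mid (k : ℕ) (hk : 1 ≤ k) : ∀ j : ℕ, wk k ((j:ℝ)/k) = 0 := by
  have hk' : (0:ℝ) < k := by exact_mod_cast hk
  intro j
  induction j with
  | zero => simp [wk]
  | succ j ih =>
    have A := intervalIntegral.integral_add_adjacent_intervals (uk_ii k 0 ((2*(j:ℝ)+1)/(2*k))) (uk_ii k ((2*(j:ℝ)+1)/(2*k)) (((j:ℝ)+1)/k))
    have B := intervalIntegral.integral_add_adjacent_intervals (uk_ii k 0 ((j:ℝ)/k)) (uk_ii k ((j:ℝ)/k) ((2*(j:ℝ)+1)/(2*k)))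
    have key : wk k (((j:ℕ)+1:ℝ)/k) = wk k ((j:ℝ)/k) + (∫ t in ((j:ℝ)/k)..((2*(j:ℝ)+1)/(2*k)), uk k t) + (∫ t in ((2*(j:ℝ)+1)/(2*k))..(((j:ℝ)+1)/k), uk k t) := by
      rw [wk, wk]
      push_cast
      linarith [A, B]
    have e1 : (∫ t in ((j:ℝ)/k)..((2*(j:ℝ)+1)/(2*k)), uk k t) = (-1)^j * (1/(2*k)) := by
      rw [int_uk k j hk (by rw [div_le_div_iff₀ (by positivity) (by positivity)]; ring_nf; nlinarith)
        (by rw [div_le_div_iff₀ (by positivity) (by positivity)]; nlinarith) le_rfl]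
      congr 1
      field_simp
      ring
    have e2 : (∫ t in ((2*(j:ℝ)+1)/(2*k))..(((j:ℝ)+1)/k), uk k t) = (-1)^(j+1) * (1/(2*k)) := by
      rw [int_uk k (j+1) hk (by rw [div_le_div_iff₀ (by positivity) (by positivity)]; push_cast; nlinarith)
        (by push_cast; rw [div_le_div_iff₀ (by positivity) (by positivity)]; nlinarith)
        (by push_cast; rw [div_le_div_iff₀ (by positivity) (by positivity)]; nlinarith)]
      congr 1
      field_simp
      ring
    push_cast at key ⊢
    rw [key, ih, e1, e2]
    ring

lemma wk_formula (k j : ℕ) (hk : 1 ≤ k) {s : ℝ}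
    (h1 : (2*(j:ℝ)-1)/(2*k) ≤ s) (h2 : s ≤ (2*(j:ℝ)+1)/(2*k)) :
    wk k s = (-1)^j * (s - (j:ℝ)/k) := by
  have hk' : (0:ℝ) < k := by exact_mod_cast hk
  have hsplit : wk k s = wk k ((j:ℝ)/k) + ∫ t in ((j:ℝ)/k)..s, uk k t := by
    rw [wk, wk, intervalIntegral.integral_add_adjacent_intervals (uk_ii k 0 _) (uk_ii k _ _)]
  rw [hsplit, wk_mid k hk j, zero_add]
  rcases le_total ((j:ℝ)/k) s with h | h
  · rw [int_uk k j hk h (by rw [div_le_div_iff₀ (by positivity) (by positivity)]; nlinarith) h2]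
  · rw [intervalIntegral.integral_symm,
      int_uk k j hk h h1 (by rw [div_le_div_iff₀ (by positivity) (by positivity)]; nlinarith)]
    ring

/-- `∫_{y_j}^{y_{j+1}} w_k = 0` for `j = 1,…,k−1`; consequently any potential `v_k`
with `v_k' = −w_k` takes the same value at all jump points `y₁,…,y_k` of `u_k`. -/
theorem stmt3 (k : ℕ) (hk : 1 ≤ k) :
    (∀ j : ℕ, 1 ≤ j → j + 1 ≤ k →
      (∫ s in ((2 * (j : ℝ) - 1) / (2 * (k : ℝ)))..((2 * (j : ℝ) + 1) / (2 * (k : ℝ))),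
        wk k s) = 0) ∧
    (∀ v : ℝ → ℝ, (∀ y ∈ Set.Icc (0 : ℝ) 1, HasDerivAt v (- wk k y) y) →
      ∀ i : ℕ, 1 ≤ i → i ≤ k → ∀ j : ℕ, 1 ≤ j → j ≤ k →
        v ((2 * (i : ℝ) - 1) / (2 * (k : ℝ))) = v ((2 * (j : ℝ) - 1) / (2 * (k : ℝ)))) := by
  have hk' : (0:ℝ) < k := by exact_mod_cast hk
  have part1 : ∀ j : ℕ, 1 ≤ j → j + 1 ≤ k →
      (∫ s in ((2 * (j : ℝ) - 1) / (2 * (k : ℝ)))..((2 * (j : ℝ) + 1) / (2 * (k : ℝ))),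
        wk k s) = 0 := by
    intro j _ _
    set a : ℝ := (2 * (j : ℝ) - 1) / (2 * (k : ℝ)) with ha
    set b : ℝ := (2 * (j : ℝ) + 1) / (2 * (k : ℝ)) with hb
    have hab : a ≤ b := by
      rw [ha, hb, div_le_div_iff₀ (by positivity) (by positivity)]
      nlinarith
    have hcongr : (∫ s in a..b, wk k s) = ∫ s in a..b, ((-1:ℝ))^j * (s - (j:ℝ)/k) := by
      apply intervalIntegral.integral_congr
      intro s hs
      rw [Set.uIcc_of_le hab] at hs
      exact wk_formula k j hk hs.1 hs.2
    rw [hcongr, intervalIntegral.integral_const_mul,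
      intervalIntegral.integral_sub intervalIntegrable_id (intervalIntegrable_const),
      integral_id, intervalIntegral.integral_const (c := (j:ℝ)/k), smul_eq_mul]
    have : (b ^ 2 - a ^ 2) / 2 - (b - a) * ((j:ℝ)/k) = 0 := by
      rw [ha, hb]
      field_simp
      ring
    rw [this, mul_zero]
  refine ⟨part1, ?_⟩
  intro v hv
  have hwcont : Continuous (wk k) := intervalIntegral.continuous_primitive (fun a b => uk_ii k a b) 0
  have adj : ∀ j : ℕ, 1 ≤ j → j + 1 ≤ k →
      v ((2 * (j : ℝ) - 1) / (2 * (k : ℝ))) = v ((2 * (j : ℝ) + 1) / (2 * (k : ℝ))) := by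
    intro j hj1 hjk
    set a : ℝ := (2 * (j : ℝ) - 1) / (2 * (k : ℝ)) with ha
    set b : ℝ := (2 * (j : ℝ) + 1) / (2 * (k : ℝ)) with hb
    have hjk' : ((j:ℝ)+1) ≤ k := by exact_mod_cast hjk
    have hj1' : (1:ℝ) ≤ j := by exact_mod_cast hj1
    have hab : a ≤ b := by
      rw [ha, hb, div_le_div_iff₀ (by positivity) (by positivity)]
      nlinarith
    have hsub : Set.uIcc a b ⊆ Set.Icc (0:ℝ) 1 := by
      rw [Set.uIcc_of_le hab]
      apply Set.Icc_subset_Icc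
      · rw [ha, le_div_iff₀ (by positivity)]; nlinarith
      · rw [hb, div_le_iff₀ (by positivity)]; nlinarith
    have ftc := intervalIntegral.integral_eq_sub_of_hasDerivAt
      (f := v) (f' := fun y => - wk k y) (fun y hy => hv y (hsub hy))
      ((hwcont.neg.intervalIntegrable a b))
    have hz : (∫ y in a..b, -wk k y) = 0 := by
      rw [intervalIntegral.integral_neg, part1 j hj1 hjk, neg_zero]
    rw [hz] at ftc
    linarith [ftc]
  have base : ∀ i : ℕ, 1 ≤ i → i ≤ k →
      v ((2 * (i : ℝ) - 1) / (2 * (k : ℝ))) = v ((2 * (1:ℕ) - 1) / (2 * (k : ℝ))) := by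
    intro i
    induction i with
    | zero => intro h; omega
    | succ i ih =>
      intro _ hik
      rcases Nat.eq_zero_or_pos i with h0 | hpos
      · subst h0; norm_num
      · have h1 := adj i hpos (by omega)
        have h2 := ih hpos (by omega)
        have hc : (2 * ((i:ℝ)+1) - 1) = 2*(i:ℝ)+1 := by ring
        push_cast
        rw [hc, ← h1, h2]
        norm_num
  intro i hi1 hik j hj1 hjk
  rw [base i hi1 hik, base j hj1 hjk]
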